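/- For every sign vector ε and every integer 1 ≤ i ≤ n (n ≥ 1), the open join σ^ε_{≤i} ∗ₒ σ^ε_{>i} of the two coordinate simplices equals Y^ε_i; that is, { (t·a + (1−t)·b)/‖t·a + (1−t)·b‖ : a ∈ σ^ε_{≤i}, b ∈ σ^ε_{>i}, t ∈ (0,1) } = { v ∈ S^n : ε_k·v_k ≥ 0 for all k, v_k ≠ 0 for some k ≤ i, and v_k ≠ 0 for some k ≥ i+1 }. -/

import Mathlib

noncomputable section

open Set

/-- The brick `Y^ε_i ⊆ S^n` (indices of coordinates are 0-based, so the
1-based condition `k ≤ i` becomes `(k : ℕ) < i`, and `k ≥ i+1` becomes `i ≤ (k : ℕ)`). -/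
def Ybrick (n : ℕ) (ε : Fin (n + 1) → ℝ) (i : ℕ) : Set (EuclideanSpace ℝ (Fin (n + 1))) :=
  {v | ‖v‖ = 1 ∧ (∀ k, 0 ≤ ε k * v k) ∧
    (∃ k : Fin (n + 1), (k : ℕ) < i ∧ v k ≠ 0) ∧
    (∃ k : Fin (n + 1), i ≤ (k : ℕ) ∧ v k ≠ 0)}

/-- The closed coordinate simplex `σ^ε_{≤ i}`. -/
def sigmaLow (n : ℕ) (ε : Fin (n + 1) → ℝ) (i : ℕ) : Set (EuclideanSpace ℝ (Fin (n + 1))) :=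
  {v | ‖v‖ = 1 ∧ (∀ k, 0 ≤ ε k * v k) ∧ ∀ k : Fin (n + 1), i ≤ (k : ℕ) → v k = 0}

/-- The closed coordinate simplex `σ^ε_{> i}`. -/
def sigmaHigh (n : ℕ) (ε : Fin (n + 1) → ℝ) (i : ℕ) : Set (EuclideanSpace ℝ (Fin (n + 1))) :=
  {v | ‖v‖ = 1 ∧ (∀ k, 0 ≤ ε k * v k) ∧ ∀ k : Fin (n + 1), (k : ℕ) < i → v k = 0}

/-- The open join `σ^ε_{≤i} ∗ₒ σ^ε_{>i}` equals `Y^ε_i`. -/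
theorem openJoin_sigmaLow_sigmaHigh_eq_Ybrick (n : ℕ) (hn : 1 ≤ n)
    (ε : Fin (n + 1) → ℝ) (hε : ∀ k, ε k = 1 ∨ ε k = -1)
    (i : ℕ) (hi1 : 1 ≤ i) (hin : i ≤ n) :
    {w : EuclideanSpace ℝ (Fin (n + 1)) |
      ∃ a ∈ sigmaLow n ε i, ∃ b ∈ sigmaHigh n ε i, ∃ t : ℝ, t ∈ Ioo (0 : ℝ) 1 ∧
        w = ‖t • a + (1 - t) • b‖⁻¹ • (t • a + (1 - t) • b)} = Ybrick n ε i := by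
  ext w
  simp only [mem_setOf_eq, Ybrick, sigmaLow, sigmaHigh]
  constructor
  · rintro ⟨a, ⟨ha1, ha2, ha3⟩, b, ⟨hb1, hb2, hb3⟩, t, ⟨ht0, ht1⟩, rfl⟩
    obtain ⟨ka, hka⟩ : ∃ k, a k ≠ 0 := by
      by_contra h
      push_neg at h
      have : a = 0 := by ext k; exact h k
      rw [this, norm_zero] at ha1; norm_num at ha1
    have hkai : (ka : ℕ) < i := by
      by_contra h
      exact hka (ha3 ka (le_of_not_gt h))
    obtain ⟨kb, hkb⟩ : ∃ k, b k ≠ 0 := by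
      by_contra h
      push_neg at h
      have : b = 0 := by ext k; exact h k
      rw [this, norm_zero] at hb1; norm_num at hb1
    have hkbi : i ≤ (kb : ℕ) := by
      by_contra h
      exact hkb (hb3 kb (lt_of_not_ge h))
    set u : EuclideanSpace ℝ (Fin (n + 1)) := t • a + (1 - t) • b with hu
    have huk : ∀ k, u k = t * a k + (1 - t) * b k := by
      intro k
      simp [hu, PiLp.add_apply, PiLp.smul_apply, smul_eq_mul]
    have hua : u ka = t * a ka := by
      rw [huk, hb3 ka hkai]; ring
    have hub : u kb = (1 - t) * b kb := by
      rw [huk, ha3 kb hkbi]; ring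
    have hu0 : u ≠ 0 := by
      intro h
      apply mul_ne_zero (ne_of_gt ht0) hka
      rw [← hua, h]; rfl
    have hc : 0 < ‖u‖ := norm_pos_iff.mpr hu0
    refine ⟨?_, ?_, ⟨ka, hkai, ?_⟩, ⟨kb, hkbi, ?_⟩⟩
    · rw [norm_smul, norm_inv, norm_norm, inv_mul_cancel₀ (ne_of_gt hc)]
    · intro k
      have hco : (‖u‖⁻¹ • u) k = ‖u‖⁻¹ * (t * a k + (1 - t) * b k) := by
        rw [PiLp.smul_apply, smul_eq_mul, huk]
      rw [hco]
      have h1 : 0 ≤ t * (ε k * a k) := mul_nonneg ht0.le (ha2 k)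
      have h2 : 0 ≤ (1 - t) * (ε k * b k) := mul_nonneg (by linarith) (hb2 k)
      have : ε k * (‖u‖⁻¹ * (t * a k + (1 - t) * b k))
          = ‖u‖⁻¹ * (t * (ε k * a k) + (1 - t) * (ε k * b k)) := by ring
      rw [this]
      exact mul_nonneg (inv_nonneg.mpr hc.le) (add_nonneg h1 h2)
    · have : (‖u‖⁻¹ • u) ka = ‖u‖⁻¹ * (t * a ka) := by
        rw [PiLp.smul_apply, smul_eq_mul, hua]
      rw [this]
      exact mul_ne_zero (inv_ne_zero (ne_of_gt hc)) (mul_ne_zero (ne_of_gt ht0) hka)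
    · have : (‖u‖⁻¹ • u) kb = ‖u‖⁻¹ * ((1 - t) * b kb) := by
        rw [PiLp.smul_apply, smul_eq_mul, hub]
      rw [this]
      exact mul_ne_zero (inv_ne_zero (ne_of_gt hc))
        (mul_ne_zero (by intro h; linarith [eq_of_sub_eq_zero h]) hkb)
  · rintro ⟨hw1, hw2, ⟨kl, hkl, hwkl⟩, ⟨kh, hkh, hwkh⟩⟩
    set vl : EuclideanSpace ℝ (Fin (n + 1)) :=
      (WithLp.toLp 2 (fun k : Fin (n + 1) => if (k : ℕ) < i then w k else 0)) with hvl
    set vh : EuclideanSpace ℝ (Fin (n + 1)) :=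
      (WithLp.toLp 2 (fun k : Fin (n + 1) => if (k : ℕ) < i then 0 else w k)) with hvh
    have hvlk : ∀ k : Fin (n + 1), vl k = if (k : ℕ) < i then w k else 0 := fun k => rfl
    have hvhk : ∀ k : Fin (n + 1), vh k = if (k : ℕ) < i then 0 else w k := fun k => rfl
    have hvl0 : vl ≠ 0 := by
      intro h
      apply hwkl
      have := congrFun (congrArg (fun (f : EuclideanSpace ℝ (Fin (n+1))) => (f : Fin (n+1) → ℝ)) h) kl
      simpa [hvlk kl, if_pos hkl] using this
    have hvh0 : vh ≠ 0 := by
      intro h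
      apply hwkh
      have := congrFun (congrArg (fun (f : EuclideanSpace ℝ (Fin (n+1))) => (f : Fin (n+1) → ℝ)) h) kh
      simpa [hvhk kh, if_neg (not_lt.mpr hkh)] using this
    have hL : 0 < ‖vl‖ := norm_pos_iff.mpr hvl0
    have hH : 0 < ‖vh‖ := norm_pos_iff.mpr hvh0
    set L := ‖vl‖
    set H := ‖vh‖
    have hS : 0 < L + H := by linarith
    refine ⟨L⁻¹ • vl, ⟨?_, ?_, ?_⟩, H⁻¹ • vh, ⟨?_, ?_, ?_⟩, L / (L + H),
      ⟨div_pos hL hS, (div_lt_one hS).mpr (by linarith)⟩, ?_⟩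
    · rw [norm_smul, norm_inv, norm_norm, inv_mul_cancel₀ (ne_of_gt hL)]
    · intro k
      rw [PiLp.smul_apply, smul_eq_mul, hvlk k]
      have : ε k * (L⁻¹ * (if (k : ℕ) < i then w k else 0))
          = L⁻¹ * (ε k * (if (k : ℕ) < i then w k else 0)) := by ring
      rw [this]
      refine mul_nonneg (inv_nonneg.mpr hL.le) ?_
      split
      · exact hw2 k
      · simp
    · intro k hk
      rw [PiLp.smul_apply, smul_eq_mul, hvlk k, if_neg (not_lt.mpr hk), mul_zero]
    · rw [norm_smul, norm_inv, norm_norm, inv_mul_cancel₀ (ne_of_gt hH)]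
    · intro k
      rw [PiLp.smul_apply, smul_eq_mul, hvhk k]
      have : ε k * (H⁻¹ * (if (k : ℕ) < i then 0 else w k))
          = H⁻¹ * (ε k * (if (k : ℕ) < i then 0 else w k)) := by ring
      rw [this]
      refine mul_nonneg (inv_nonneg.mpr hH.le) ?_
      split
      · simp
      · exact hw2 k
    · intro k hk
      rw [PiLp.smul_apply, smul_eq_mul, hvhk k, if_pos hk, mul_zero]
    · have hsum : vl + vh = w := by
        ext k
        rw [PiLp.add_apply, hvlk k, hvhk k]
        split <;> ring
      have h1 : (L / (L + H)) • (L⁻¹ • vl) = (L + H)⁻¹ • vl := by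
        rw [smul_smul]
        congr 1
        field_simp
      have h2 : (1 - L / (L + H)) • (H⁻¹ • vh) = (L + H)⁻¹ • vh := by
        rw [smul_smul]
        congr 1
        field_simp
        ring
      rw [h1, h2, ← smul_add, hsum, norm_smul, norm_inv, Real.norm_eq_abs,
        abs_of_pos hS, hw1, mul_one, inv_inv, smul_smul,
        mul_inv_cancel₀ (ne_of_gt hS), one_smul]
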